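/- Let p be a prime, G a finite p-group, and V a module over the group algebra F_p[G]. Suppose v ∈ V satisfies Σ_{g ∈ G} g·v ≠ 0. Then the F_p[G]-module map F_p[G] → V sending x to x·v is injective; in particular the F_p[G]-submodule of V generated by v is a free F_p[G]-module of rank 1. -/

import Mathlib

open MonoidAlgebra MulAction

/-- In the group algebra `F_p[G]` of a finite `p`-group, every nonzero left submodule
(left ideal) contains the "norm element" `∑ g, g`. -/
theorem aux_norm_mem (p : ℕ) (hp : p.Prime) (G : Type*) [Group G] [Fintype G]
    (hG : IsPGroup p G)
    (I : Submodule (MonoidAlgebra (ZMod p) G) (MonoidAlgebra (ZMod p) G)) (hI : I ≠ ⊥) :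
    (∑ g : G, MonoidAlgebra.of (ZMod p) G g) ∈ I := by
  haveI : Fact p.Prime := ⟨hp⟩
  classical
  -- G acts on I by left multiplication
  letI : MulAction G I :=
    { smul := fun g a => ⟨of (ZMod p) G g * (a : MonoidAlgebra (ZMod p) G),
        by simpa [smul_eq_mul] using I.smul_mem (of (ZMod p) G g) a.2⟩
      one_smul := fun a => Subtype.ext (by
        show of (ZMod p) G 1 * (a : MonoidAlgebra (ZMod p) G) = a
        rw [MonoidAlgebra.of_apply, ← MonoidAlgebra.one_def, one_mul])
      mul_smul := fun g h a => Subtype.ext (by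
        show of (ZMod p) G (g * h) * (a : MonoidAlgebra (ZMod p) G)
          = of (ZMod p) G g * (of (ZMod p) G h * (a : MonoidAlgebra (ZMod p) G))
        simp only [MonoidAlgebra.of_apply]
        rw [← mul_assoc, MonoidAlgebra.single_mul_single, mul_one]) }
  haveI : Finite (MonoidAlgebra (ZMod p) G) := Finite.of_equiv _ MonoidAlgebra.coeffEquiv.symm
  haveI : Finite I := Subtype.finite
  haveI : Fintype I := Fintype.ofFinite I
  haveI : Nontrivial I := by
    obtain ⟨x, hxI, hx0⟩ := Submodule.exists_mem_ne_zero_of_ne_bot hI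
    exact ⟨⟨x, hxI⟩, 0, by simpa using hx0⟩
  -- |I| is a positive power of p
  have hcardI : p ∣ Nat.card I := by
    rw [Nat.card_eq_fintype_card, Module.card_eq_pow_finrank (K := ZMod p) (V := I), ZMod.card]
    exact dvd_pow_self p (Module.finrank_pos (R := ZMod p) (M := I)).ne'
  -- hence the fixed points have cardinality divisible by p, giving a nonzero fixed point
  have hfix : p ∣ Nat.card (fixedPoints G I) := by
    have := hG.card_modEq_card_fixedPoints (α := I)
    exact (Nat.modEq_zero_iff_dvd.mp ((this.symm.trans
      (Nat.modEq_zero_iff_dvd.mpr hcardI))))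
  have h0fix : (0 : I) ∈ fixedPoints G I := by
    intro g
    exact Subtype.ext (by
      show of (ZMod p) G g * ((0 : I) : MonoidAlgebra (ZMod p) G) = ((0 : I) : _)
      simp)
  haveI : Finite (fixedPoints G I) := Subtype.finite
  have hpos : 0 < Nat.card (fixedPoints G I) :=
    Nat.card_pos_iff.mpr ⟨⟨⟨0, h0fix⟩⟩, inferInstance⟩
  have hlt : 1 < Nat.card (fixedPoints G I) :=
    lt_of_lt_of_le hp.one_lt (Nat.le_of_dvd hpos hfix)
  haveI : Nontrivial (fixedPoints G I) := Finite.one_lt_card_iff_nontrivial.mp hlt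
  obtain ⟨a, ha⟩ := exists_ne (α := fixedPoints G I) ⟨0, h0fix⟩
  -- a is a nonzero element of I fixed by all g, i.e. of g * a = a
  set b : MonoidAlgebra (ZMod p) G := ((a : I) : MonoidAlgebra (ZMod p) G) with hb
  have hbI : b ∈ I := (a : I).2
  have hb0 : b ≠ 0 := by
    intro h
    exact ha (Subtype.ext (Subtype.ext h))
  have hfixb : ∀ g : G, of (ZMod p) G g * b = b := fun g =>
    congrArg (Subtype.val) (a.2 g)
  -- b is a constant function on G
  have hconst : ∀ h : G, b.coeff h = b.coeff 1 := by
    intro h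
    have := congrArg (fun x : MonoidAlgebra (ZMod p) G => x.coeff h) (hfixb h)
    simp only [MonoidAlgebra.of_apply, MonoidAlgebra.single_mul_apply, one_mul,
      inv_mul_cancel] at this
    exact this.symm
  have hb1 : b.coeff 1 ≠ 0 := by
    intro h
    apply hb0
    ext g
    simp [hconst g, h]
  -- hence b = (b.coeff 1) • N, so N = (b.coeff 1)⁻¹ • b ∈ I
  have hbN : b = (b.coeff 1) • ∑ g : G, of (ZMod p) G g := by
    ext h
    rw [hconst h]
    have : ((b.coeff 1 • ∑ x : G, Finsupp.single x (1 : ZMod p) : G →₀ ZMod p)) h = b.coeff 1 := by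
      simp [Finsupp.smul_apply, Finset.sum_apply', Finsupp.single_apply]
    simp [MonoidAlgebra.of_apply, MonoidAlgebra.coeff_sum, MonoidAlgebra.coeff_single]
  have key : (b.coeff 1)⁻¹ • ((b.coeff 1) • (∑ g : G, of (ZMod p) G g)) = ∑ g : G, of (ZMod p) G g := by
    rw [smul_smul, inv_mul_cancel₀ hb1, one_smul]
  rw [← key, ← hbN, ← algebraMap_smul (MonoidAlgebra (ZMod p) G) ((b.coeff 1)⁻¹) b]
  exact I.smul_mem _ hbI

theorem stmt_13 (p : ℕ) (hp : p.Prime) (G : Type*) [Group G] [Fintype G]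
    (hG : IsPGroup p G)
    (V : Type*) [AddCommGroup V] [Module (MonoidAlgebra (ZMod p) G) V]
    (v : V)
    (hv : (∑ g : G, MonoidAlgebra.of (ZMod p) G g • v) ≠ 0) :
    Function.Injective (fun x : MonoidAlgebra (ZMod p) G => x • v) ∧
    Nonempty (MonoidAlgebra (ZMod p) G ≃ₗ[MonoidAlgebra (ZMod p) G]
      Submodule.span (MonoidAlgebra (ZMod p) G) {v}) := by
  classical
  set A := MonoidAlgebra (ZMod p) G with hA
  set N : A := ∑ g : G, of (ZMod p) G g with hN
  have hNv : N • v ≠ 0 := by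
    rw [hN, Finset.sum_smul]
    exact hv
  have hinj : Function.Injective (LinearMap.toSpanSingleton A V v) := by
    rw [injective_iff_map_eq_zero]
    intro x hx
    by_contra hx0
    have hI : Submodule.span A ({x} : Set A) ≠ ⊥ := by
      simpa [Submodule.span_singleton_eq_bot] using hx0
    have hmem := aux_norm_mem p hp G hG (Submodule.span A {x}) hI
    obtain ⟨y, hy⟩ := Submodule.mem_span_singleton.mp hmem
    apply hNv
    simp only [LinearMap.toSpanSingleton_apply] at hx
    rw [hN, ← hy, smul_eq_mul, mul_smul, hx, smul_zero]
  refine ⟨hinj, ⟨?_⟩⟩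
  exact (LinearEquiv.ofInjective (LinearMap.toSpanSingleton A V v) hinj).trans
    (LinearEquiv.ofEq _ _ (LinearMap.span_singleton_eq_range A V v).symm)
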